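/- Let V be a nonzero finite-dimensional real inner product space equipped with a bilinear multiplication · : V × V → V that is commutative (x·y = y·x), associative (x·(y·z) = (x·y)·z), and invariant with respect to the inner product (⟨x·y, z⟩ = ⟨y, x·z⟩ for all x, y, z). Then there exist an orthonormal basis (e₁, …, e_N) of V and nonnegative real numbers κ₁, …, κ_N such that e_a · e_b = 0 whenever a ≠ b and e_a · e_a = κ_a e_a for every a. In particular, V decomposes as an orthogonal direct sum of one-dimensional ideals of the algebra (V, ·). -/

import Mathlib

open scoped RealInnerProductSpace

open Module.End Submodule in
/-- A nonzero finite-dimensional real inner product space with a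
commutative, associative, inner-product-invariant bilinear multiplication admits an
orthonormal basis of mutually annihilating idempotent-like vectors with nonnegative
self-coupling constants: the algebra is an orthogonal direct sum of one-dimensional
ideals. -/
theorem multi_graviton_algebra_trivial
    {V : Type*} [NormedAddCommGroup V] [InnerProductSpace ℝ V]
    [FiniteDimensional ℝ V] [Nontrivial V]
    (mul : V →ₗ[ℝ] V →ₗ[ℝ] V)
    (hcomm : ∀ x y : V, mul x y = mul y x)
    (hassoc : ∀ x y z : V, mul x (mul y z) = mul (mul x y) z)
    (hinv : ∀ x y z : V, ⟪mul x y, z⟫ = ⟪y, mul x z⟫) :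
    ∃ (e : OrthonormalBasis (Fin (Module.finrank ℝ V)) ℝ V)
      (κ : Fin (Module.finrank ℝ V) → ℝ),
      (∀ a, 0 ≤ κ a) ∧
      (∀ a b, a ≠ b → mul (e a) (e b) = 0) ∧
      (∀ a, mul (e a) (e a) = κ a • e a) := by
  classical
  -- Each left-multiplication operator is symmetric, and they pairwise commute.
  have hsym : ∀ x : V, (mul x).IsSymmetric := fun x y z => hinv x y z
  have hcommT : ∀ x y : V, Commute (mul x) (mul y) := by
    intro x y
    refine LinearMap.ext fun z => ?_
    simp only [Module.End.mul_apply]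
    rw [hassoc, hassoc, hcomm x y]
  -- Joint eigenspaces fill out the whole space and form an orthogonal family.
  set E : (V → ℝ) → Submodule ℝ V :=
    fun χ => ⨅ x : V, eigenspace (mul x) (χ x) with hE
  have h_top : (⨆ χ : V → ℝ, E χ) = ⊤ :=
    LinearMap.IsSymmetric.iSup_iInf_eq_top_of_commute hsym (fun x y _ => hcommT x y)
  have hfam : OrthogonalFamily ℝ (fun χ : V → ℝ => (E χ : Submodule ℝ V))
      (fun χ => (E χ).subtypeₗᵢ) :=
    LinearMap.IsSymmetric.orthogonalFamily_iInf_eigenspaces hsym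
  have hfin : {χ : V → ℝ | E χ ≠ ⊥}.Finite :=
    WellFoundedGT.finite_ne_bot_of_iSupIndep hfam.independent
  -- Restrict to the finitely many nontrivial joint eigenspaces.
  let S := hfin.toFinset
  let E' : S → Submodule ℝ V := fun i => E i.1
  have hfam' : OrthogonalFamily ℝ (fun i : S => (E' i : Submodule ℝ V))
      (fun i => (E' i).subtypeₗᵢ) :=
    hfam.comp Subtype.val_injective
  have hsup' : (⨆ i : S, E' i) = ⊤ := by
    rw [eq_top_iff, ← h_top]
    refine iSup_le fun χ => ?_
    by_cases h : E χ = ⊥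
    · simp [h]
    · exact le_iSup (fun i : S => E' i) ⟨χ, by simpa [S] using h⟩
  have hint : DirectSum.IsInternal E' := by
    rw [hfam'.isInternal_iff]
    rw [hsup', top_orthogonal_eq_bot]
  -- An orthonormal basis subordinate to the joint eigenspace decomposition.
  let b : OrthonormalBasis (Fin (Module.finrank ℝ V)) ℝ V :=
    hint.subordinateOrthonormalBasis rfl hfam'
  have hmem : ∀ a, ∀ x : V, mul x (b a) =
      ((hint.subordinateOrthonormalBasisIndex rfl a hfam' : S) : V → ℝ) x • b a := by
    intro a x
    have h1 := hint.subordinateOrthonormalBasis_subordinate rfl a hfam'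
    have h2 : b a ∈ E ((hint.subordinateOrthonormalBasisIndex rfl a hfam' : S) : V → ℝ) := h1
    rw [hE] at h2
    have := (Submodule.mem_iInf _).mp h2 x
    exact (Module.End.mem_eigenspace_iff).mp this
  -- Off-diagonal products vanish.
  have hoff : ∀ a c : Fin (Module.finrank ℝ V), a ≠ c → mul (b a) (b c) = 0 := by
    intro a c hac
    have h1 := hmem c (b a)
    have e1 : ⟪mul (b a) (b c), b c⟫ =
        ((hint.subordinateOrthonormalBasisIndex rfl c hfam' : S) : V → ℝ) (b a) := by
      rw [h1, real_inner_smul_left, real_inner_self_eq_norm_sq, b.orthonormal.1 c]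
      norm_num
    have e2 : ⟪mul (b a) (b c), b c⟫ = 0 := by
      rw [hcomm, hmem a (b c), real_inner_smul_left, b.orthonormal.2 hac, mul_zero]
    rw [h1, e1.symm.trans e2, zero_smul]
  -- Diagonal products are scalar multiples.
  set c : Fin (Module.finrank ℝ V) → ℝ := fun a => ⟪mul (b a) (b a), b a⟫ with hc
  have hdiag : ∀ a, mul (b a) (b a) = c a • b a := by
    intro a
    have h1 := hmem a (b a)
    rw [hc]
    simp only
    rw [h1, real_inner_smul_left, real_inner_self_eq_norm_sq, b.orthonormal.1 a]
    norm_num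
  -- Flip signs to make the self-couplings nonnegative.
  set u : Fin (Module.finrank ℝ V) → ℝˣ := fun a => if 0 ≤ c a then 1 else -1 with hu
  have hu1 : ∀ a, ((u a : ℝ) = 1 ∨ (u a : ℝ) = -1) := by
    intro a; by_cases h : 0 ≤ c a <;> simp [hu, h]
  have husq : ∀ a, (u a : ℝ) * (u a : ℝ) = 1 := by
    intro a; rcases hu1 a with h | h <;> rw [h] <;> norm_num
  have hcoe : ∀ a, ((b.toBasis.unitsSMul u) a) = (u a : ℝ) • b a := by
    intro a
    rw [Module.Basis.unitsSMul_apply, Units.smul_def, b.coe_toBasis]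
  have horth : Orthonormal ℝ ⇑(b.toBasis.unitsSMul u) := by
    rw [orthonormal_iff_ite]
    intro i j
    rw [hcoe, hcoe, real_inner_smul_left, real_inner_smul_right,
      orthonormal_iff_ite.mp b.orthonormal i j]
    by_cases h : i = j
    · subst h; simp [husq i, ← mul_assoc]
    · simp [h]
  refine ⟨(b.toBasis.unitsSMul u).toOrthonormalBasis horth, fun a => (u a : ℝ) * c a,
    ?_, ?_, ?_⟩
  · intro a
    by_cases h : 0 ≤ c a
    · simpa [hu, h] using h
    · push_neg at h
      simp only [hu, h.not_ge, if_false, Units.val_neg, Units.val_one]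
      nlinarith
  · intro a d had
    rw [Module.Basis.coe_toOrthonormalBasis, hcoe, hcoe]
    simp only [map_smul, LinearMap.smul_apply, smul_smul]
    rw [hoff a d had, smul_zero]
  · intro a
    rw [Module.Basis.coe_toOrthonormalBasis, hcoe]
    simp only [map_smul, LinearMap.smul_apply, smul_smul]
    rw [hdiag a, smul_smul]
    congr 1
    ring
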